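/- arXiv:2403.00719 — 2 statements merged into one kernel-verified Lean document; each statement's English description precedes it below -/
import Mathlib

section
/- Let h : ℂ → ℂ be C¹ with compact support and set hₜ(x) = x + t·h(x). Then as t → 0, the inverse map satisfies hₜ⁻¹(x) = x − t·h(x) + o(t), uniformly in x ∈ ℂ, for all sufficiently small |t| (for which hₜ is a bijection of ℂ). -/
/-- For `h : ℂ → ℂ` of class `C¹` with compact support and `hₜ(x) = x + t·h(x)`,
as `t → 0` the map `hₜ` is a bijection of `ℂ` and its inverse satisfies
`hₜ⁻¹(x) = x − t·h(x) + o(t)`, uniformly in `x`. -/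
theorem inverse_perturbation_expansion (h : ℂ → ℂ)
    (hC1 : ContDiff ℝ 1 h) (hsupp : HasCompactSupport h) :
    ∀ ε : ℝ, 0 < ε → ∃ δ : ℝ, 0 < δ ∧ ∀ t : ℝ, |t| < δ →
      Function.Bijective (fun x : ℂ => x + (t : ℂ) * h x) ∧
      ∀ x : ℂ,
        ‖Function.invFun (fun x : ℂ => x + (t : ℂ) * h x) x -
          (x - (t : ℂ) * h x)‖ ≤ ε * |t| := by
  obtain ⟨L, hL⟩ := hC1.lipschitzWith_of_hasCompactSupport hsupp one_ne_zero
  obtain ⟨M, hM⟩ := hsupp.exists_bound_of_continuous hC1.continuous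
  have hM0 : 0 ≤ M := le_trans (norm_nonneg _) (hM 0)
  intro ε hε
  refine ⟨min (1 / ((L : ℝ) + 1)) (ε / ((L : ℝ) * M + 1)), ?_, ?_⟩
  · exact lt_min (by positivity) (by positivity)
  intro t ht
  have ht1 : |t| * (L : ℝ) < 1 := by
    have h1 : |t| < 1 / ((L : ℝ) + 1) := lt_of_lt_of_le ht (min_le_left _ _)
    have : |t| * ((L : ℝ) + 1) < 1 := by
      rw [← lt_div_iff₀ (by positivity)]; exact h1
    nlinarith [abs_nonneg t, L.coe_nonneg]
  have ht2 : |t| * ((L : ℝ) * M) ≤ ε := by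
    have h2 : |t| < ε / ((L : ℝ) * M + 1) := lt_of_lt_of_le ht (min_le_right _ _)
    have : |t| * ((L : ℝ) * M + 1) < ε := by
      rw [← lt_div_iff₀ (by positivity)]; exact h2
    nlinarith [abs_nonneg t, L.coe_nonneg]
  set f : ℂ → ℂ := fun x : ℂ => x + (t : ℂ) * h x with hf
  -- key Lipschitz estimate for t • h
  have key : ∀ x y : ℂ, ‖(t : ℂ) * h x - (t : ℂ) * h y‖ ≤ |t| * (L : ℝ) * ‖x - y‖ := by
    intro x y
    rw [← mul_sub]
    rw [norm_mul, Complex.norm_real, Real.norm_eq_abs, mul_assoc]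
    exact mul_le_mul_of_nonneg_left (hL.norm_sub_le x y) (abs_nonneg t)
  have hinj : Function.Injective f := by
    intro x y hxy
    simp only [hf] at hxy
    have hxy' : x - y = -((t : ℂ) * h x - (t : ℂ) * h y) := by ring_nf; linear_combination hxy
    by_contra hne
    have hpos : 0 < ‖x - y‖ := norm_pos_iff.2 (sub_ne_zero.2 hne)
    have : ‖x - y‖ ≤ |t| * (L : ℝ) * ‖x - y‖ := by
      calc ‖x - y‖ = ‖(t : ℂ) * h x - (t : ℂ) * h y‖ := by rw [hxy', norm_neg]
      _ ≤ |t| * (L : ℝ) * ‖x - y‖ := key x y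
    nlinarith
  have hsurj : Function.Surjective f := by
    intro x
    -- fixed point of y ↦ x - t h y
    set K : NNReal := ⟨|t| * (L : ℝ), by positivity⟩ with hK
    have hcontr : ContractingWith K (fun y : ℂ => x - (t : ℂ) * h y) := by
      constructor
      · exact_mod_cast ht1
      · intro a b
        rw [edist_eq_enorm_sub, edist_eq_enorm_sub, enorm_eq_nnnorm, enorm_eq_nnnorm]
        have : ‖(x - (t : ℂ) * h a) - (x - (t : ℂ) * h b)‖ ≤ (K : ℝ) * ‖a - b‖ := by
          have : (x - (t : ℂ) * h a) - (x - (t : ℂ) * h b)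
              = -((t : ℂ) * h a - (t : ℂ) * h b) := by ring
          rw [this, norm_neg]; exact key a b
        calc (‖(x - (t : ℂ) * h a) - (x - (t : ℂ) * h b)‖₊ : ENNReal)
            ≤ ((K * ‖a - b‖₊ : NNReal) : ENNReal) := by
              exact_mod_cast (by exact_mod_cast this : ‖(x - (t : ℂ) * h a) - (x - (t : ℂ) * h b)‖₊ ≤ K * ‖a - b‖₊)
          _ = (K : ENNReal) * (‖a - b‖₊ : ENNReal) := by push_cast; ring
    obtain ⟨y, hy, -⟩ := hcontr.exists_fixedPoint 0 (by simp [edist_ne_top])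
    refine ⟨y, ?_⟩
    have : x - (t : ℂ) * h y = y := hy
    simp only [hf]
    linear_combination -this
  refine ⟨⟨hinj, hsurj⟩, ?_⟩
  intro x
  set y := Function.invFun f x with hy
  have hfy : f y = x := Function.invFun_eq (hsurj x)
  have hyx : y = x - (t : ℂ) * h y := by
    simp only [hf] at hfy; linear_combination hfy
  have : y - (x - (t : ℂ) * h x) = (t : ℂ) * h x - (t : ℂ) * h y := by
    linear_combination hyx
  rw [this]
  calc ‖(t : ℂ) * h x - (t : ℂ) * h y‖ ≤ |t| * (L : ℝ) * ‖x - y‖ := key x y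
    _ ≤ |t| * (L : ℝ) * (|t| * M) := by
        apply mul_le_mul_of_nonneg_left _ (by positivity)
        have hxy2 : x - y = (t : ℂ) * h y := by linear_combination -hyx
        rw [hxy2, norm_mul, Complex.norm_real, Real.norm_eq_abs]
        exact mul_le_mul_of_nonneg_left (hM y) (abs_nonneg t)
    _ = |t| * ((L : ℝ) * M) * |t| := by ring
    _ ≤ ε * |t| := mul_le_mul_of_nonneg_right ht2 (abs_nonneg t)
end

section
/- Let (μₙ) be Borel probability measures on ℂ converging vaguely to a finite Borel measure μ₀, and let h : ℂ → ℂ be C² with compact support, so that g(x,y) := (h(x)−h(y))/(x−y) (extended by the derivative on the diagonal in the sense of being continuous and bounded) satisfies: ∬ g dμₙ dμₙ → ∬ g dμ₀ dμ₀. -/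
open MeasureTheory Filter Topology

namespace DIDQC

/-- Explicit continuous cutoff: equals 1 on `|z| ≤ R`, vanishes for `|z| ≥ R+1`, values in `[0,1]`. -/
noncomputable def cut (R : ℝ) (z : ℂ) : ℝ := min 1 (max 0 (R + 1 - ‖z‖))

lemma cut_continuous (R : ℝ) : Continuous (cut R) := by
  unfold cut
  exact (continuous_const.min ((continuous_const.max (continuous_const.sub continuous_norm))))

lemma cut_nonneg (R : ℝ) (z : ℂ) : 0 ≤ cut R z := le_min zero_le_one (le_max_left _ _)

lemma cut_le_one (R : ℝ) (z : ℂ) : cut R z ≤ 1 := min_le_left _ _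

lemma cut_eq_one {R : ℝ} {z : ℂ} (hz : ‖z‖ ≤ R) : cut R z = 1 := by
  unfold cut
  have : (1:ℝ) ≤ R + 1 - ‖z‖ := by linarith
  rw [max_eq_right (by linarith), min_eq_left this]

lemma cut_eq_zero {R : ℝ} {z : ℂ} (hz : R + 1 < ‖z‖) : cut R z = 0 := by
  unfold cut
  rw [max_eq_left (by linarith), min_eq_right (by norm_num)]

lemma cut_hcs (R : ℝ) : HasCompactSupport (cut R) := by
  apply HasCompactSupport.intro (K := Metric.closedBall 0 (R + 1)) (isCompact_closedBall _ _)
  intro x hx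
  apply cut_eq_zero
  simpa [Complex.dist_eq] using hx

/-- The product-of-cutoffs on `ℂ × ℂ`. -/
noncomputable def cut2 (R : ℝ) (p : ℂ × ℂ) : ℝ := cut R p.1 * cut R p.2

lemma cut2_continuous (R : ℝ) : Continuous (cut2 R) :=
  ((cut_continuous R).comp continuous_fst).mul ((cut_continuous R).comp continuous_snd)

lemma cut2_nonneg (R : ℝ) (p : ℂ × ℂ) : 0 ≤ cut2 R p :=
  mul_nonneg (cut_nonneg _ _) (cut_nonneg _ _)

lemma cut2_le_one (R : ℝ) (p : ℂ × ℂ) : cut2 R p ≤ 1 :=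
  mul_le_one₀ (cut_le_one _ _) (cut_nonneg _ _) (cut_le_one _ _)

lemma cut2_hcs (R : ℝ) : HasCompactSupport (cut2 R) := by
  apply HasCompactSupport.intro
    (K := Metric.closedBall 0 (R + 1) ×ˢ Metric.closedBall 0 (R + 1))
    ((isCompact_closedBall _ _).prod (isCompact_closedBall _ _))
  intro p hp
  rw [Set.mem_prod] at hp
  push_neg at hp
  unfold cut2
  by_cases h1 : p.1 ∈ Metric.closedBall (0:ℂ) (R+1)
  · have h2 := hp h1
    rw [cut_eq_zero (z := p.2) (by simpa [Complex.dist_eq] using h2), mul_zero]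
  · rw [cut_eq_zero (z := p.1) (by simpa [Complex.dist_eq] using h1), zero_mul]

/-- Generating set: products of a continuous function of `x` and one of `y`. -/
def prodSet : Set ((ℂ × ℂ) → ℝ) :=
  {F | ∃ f k : ℂ → ℝ, Continuous f ∧ Continuous k ∧ F = fun p => f p.1 * k p.2}

/-- Span of products. -/
def V : Submodule ℝ ((ℂ × ℂ) → ℝ) := Submodule.span ℝ prodSet

lemma prodSet_mul {F G : (ℂ × ℂ) → ℝ} (hF : F ∈ prodSet) (hG : G ∈ prodSet) :
    F * G ∈ prodSet := by
  obtain ⟨f, k, hf, hk, rfl⟩ := hF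
  obtain ⟨f', k', hf', hk', rfl⟩ := hG
  exact ⟨fun x => f x * f' x, fun y => k y * k' y, hf.mul hf', hk.mul hk', by
    funext p; simp [Pi.mul_apply]; ring⟩

lemma V_mul {F G : (ℂ × ℂ) → ℝ} (hF : F ∈ V) (hG : G ∈ V) : F * G ∈ V := by
  induction hF using Submodule.span_induction with
  | mem F' hF' =>
    induction hG using Submodule.span_induction with
    | mem G' hG' => exact Submodule.subset_span (prodSet_mul hF' hG')
    | zero => simpa using (V : Submodule ℝ _).zero_mem
    | add x y hx hy px py => rw [mul_add]; exact (V).add_mem px py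
    | smul a x hx px => rw [mul_smul_comm]; exact (V).smul_mem a px
  | zero => simpa using (V).zero_mem
  | add x y hx hy px py => rw [add_mul]; exact (V).add_mem px py
  | smul a x hx px => rw [smul_mul_assoc]; exact (V).smul_mem a px


lemma integrable_mul_cut2 {F : (ℂ × ℂ) → ℝ} (hF : Continuous F) (R : ℝ)
    (μ ν : Measure ℂ) [IsFiniteMeasure μ] [IsFiniteMeasure ν] :
    Integrable (fun p => F p * cut2 R p) (μ.prod ν) :=
  (hF.mul (cut2_continuous R)).integrable_of_hasCompactSupport
    ((cut2_hcs R).mul_left)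

lemma tendsto_V
    (μn : ℕ → Measure ℂ) (μ0 : Measure ℂ)
    [∀ n, IsProbabilityMeasure (μn n)] [IsFiniteMeasure μ0]
    (hconv : ∀ f : ℂ → ℝ, Continuous f → HasCompactSupport f →
      Tendsto (fun n => ∫ x, f x ∂(μn n)) atTop (𝓝 (∫ x, f x ∂μ0)))
    (R : ℝ) {F : (ℂ × ℂ) → ℝ} (hF : F ∈ V) :
    Continuous F ∧
      Tendsto (fun n => ∫ p, F p * cut2 R p ∂((μn n).prod (μn n))) atTop
        (𝓝 (∫ p, F p * cut2 R p ∂(μ0.prod μ0))) := by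
  induction hF using Submodule.span_induction with
  | mem F' hF' =>
    obtain ⟨f, k, hf, hk, rfl⟩ := hF'
    constructor
    · exact (hf.comp continuous_fst).mul (hk.comp continuous_snd)
    · have key : ∀ (μ : Measure ℂ), IsFiniteMeasure μ →
          ∫ p, (f p.1 * k p.2) * cut2 R p ∂(μ.prod μ)
            = (∫ x, f x * cut R x ∂μ) * (∫ y, k y * cut R y ∂μ) := by
        intro μ hμ
        haveI := hμ
        have : (fun p : ℂ × ℂ => (f p.1 * k p.2) * cut2 R p)
            = fun p : ℂ × ℂ => (fun x => f x * cut R x) p.1 * (fun y => k y * cut R y) p.2 := by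
          funext p; unfold cut2; ring
        rw [this]; exact integral_prod_mul (L := ℝ) (μ := μ) (ν := μ) (fun x => f x * cut R x) (fun y => k y * cut R y)
      have h1 := hconv (fun x => f x * cut R x) (hf.mul (cut_continuous R)) (cut_hcs R).mul_left
      have h2 := hconv (fun y => k y * cut R y) (hk.mul (cut_continuous R)) (cut_hcs R).mul_left
      have := h1.mul h2
      simp only [key (μ0) inferInstance]
      convert this using 2 with n
      exact key (μn n) inferInstance
  | zero => simp only [Pi.zero_apply, zero_mul, integral_zero]; exact ⟨continuous_const, tendsto_const_nhds⟩
  | add x y hx hy px py =>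
    refine ⟨px.1.add py.1, ?_⟩
    have hrw : ∀ (μ : Measure ℂ), IsFiniteMeasure μ →
        ∫ p, (x + y) p * cut2 R p ∂(μ.prod μ)
          = (∫ p, x p * cut2 R p ∂(μ.prod μ)) + ∫ p, y p * cut2 R p ∂(μ.prod μ) := by
      intro μ hμ
      haveI := hμ
      have : (fun p => (x + y) p * cut2 R p)
          = fun p => x p * cut2 R p + y p * cut2 R p := by funext p; simp [Pi.add_apply]; ring
      rw [this, integral_add (integrable_mul_cut2 px.1 R μ μ) (integrable_mul_cut2 py.1 R μ μ)]
    simp only [hrw μ0 inferInstance]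
    have := px.2.add py.2
    convert this using 2 with n
    exact hrw (μn n) inferInstance
  | smul a x hx px =>
    refine ⟨px.1.const_smul a, ?_⟩
    have hrw : ∀ (μ : Measure ℂ),
        ∫ p, (a • x) p * cut2 R p ∂(μ.prod μ) = a * ∫ p, x p * cut2 R p ∂(μ.prod μ) := by
      intro μ
      have : (fun p => (a • x) p * cut2 R p) = fun p => a • (x p * cut2 R p) := by
        funext p; simp [Pi.smul_apply]; ring
      rw [this, integral_smul, smul_eq_mul]
    simp only [hrw]
    exact px.2.const_mul a


lemma cut2_eq_zero_of_nmem {R : ℝ} {p : ℂ × ℂ}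
    (hp : p ∉ (Metric.closedBall (0:ℂ) (R+1)) ×ˢ (Metric.closedBall (0:ℂ) (R+1))) :
    cut2 R p = 0 := by
  rw [Set.mem_prod] at hp
  push_neg at hp
  unfold cut2
  by_cases h1 : p.1 ∈ Metric.closedBall (0:ℂ) (R+1)
  · have h2 := hp h1
    rw [cut_eq_zero (z := p.2) (by simpa [Complex.dist_eq] using h2), mul_zero]
  · rw [cut_eq_zero (z := p.1) (by simpa [Complex.dist_eq] using h1), zero_mul]

lemma tendsto_Cc_real
    (μn : ℕ → Measure ℂ) (μ0 : Measure ℂ)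
    [∀ n, IsProbabilityMeasure (μn n)] [IsFiniteMeasure μ0]
    (hconv : ∀ f : ℂ → ℝ, Continuous f → HasCompactSupport f →
      Tendsto (fun n => ∫ x, f x ∂(μn n)) atTop (𝓝 (∫ x, f x ∂μ0)))
    {F : (ℂ × ℂ) → ℝ} (hFc : Continuous F) (hFs : HasCompactSupport F) :
    Tendsto (fun n => ∫ p, F p ∂((μn n).prod (μn n))) atTop
      (𝓝 (∫ p, F p ∂(μ0.prod μ0))) := by
  classical
  obtain ⟨S₀, hS₀⟩ := (hFs : IsCompact (tsupport F)).isBounded.subset_closedBall (0 : ℂ × ℂ)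
  set S : ℝ := max S₀ 0 with hSdef
  have hsupp2 : ∀ p : ℂ × ℂ, p ∈ tsupport F →
      ‖p.1‖ ≤ S ∧ ‖p.2‖ ≤ S := by
    intro p hp
    have hb := hS₀ hp
    rw [Metric.mem_closedBall, Prod.dist_eq] at hb
    have h1 : dist p.1 (0:ℂ) ≤ S₀ := le_trans (le_max_left _ _) hb
    have h2 : dist p.2 (0:ℂ) ≤ S₀ := le_trans (le_max_right _ _) hb
    rw [Complex.dist_eq, sub_zero] at h1 h2
    exact ⟨le_trans h1 (le_max_left _ _), le_trans h2 (le_max_left _ _)⟩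
  have hFeq : F = fun p => F p * cut2 S p := by
    funext p
    by_cases hp : p ∈ tsupport F
    · obtain ⟨h1, h2⟩ := hsupp2 p hp
      unfold cut2
      rw [cut_eq_one h1, cut_eq_one h2]; ring
    · rw [image_eq_zero_of_notMem_tsupport hp, zero_mul]
  set T : Set (ℂ × ℂ) := (Metric.closedBall (0:ℂ) (S+1)) ×ˢ (Metric.closedBall (0:ℂ) (S+1))
    with hTdef
  have hTc : IsCompact T := (isCompact_closedBall _ _).prod (isCompact_closedBall _ _)
  haveI : CompactSpace T := isCompact_iff_compactSpace.mp hTc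
  let e1 : C(T, ℝ) := ⟨fun q => (q : ℂ × ℂ).1.re,
    Complex.continuous_re.comp (continuous_fst.comp continuous_subtype_val)⟩
  let e2 : C(T, ℝ) := ⟨fun q => (q : ℂ × ℂ).1.im,
    Complex.continuous_im.comp (continuous_fst.comp continuous_subtype_val)⟩
  let e3 : C(T, ℝ) := ⟨fun q => (q : ℂ × ℂ).2.re,
    Complex.continuous_re.comp (continuous_snd.comp continuous_subtype_val)⟩
  let e4 : C(T, ℝ) := ⟨fun q => (q : ℂ × ℂ).2.im,
    Complex.continuous_im.comp (continuous_snd.comp continuous_subtype_val)⟩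
  set A : Subalgebra ℝ C(T, ℝ) := Algebra.adjoin ℝ {e1, e2, e3, e4} with hAdef
  have hsep : A.SeparatesPoints := by
    intro q q' hqq
    have hne : (q : ℂ × ℂ) ≠ (q' : ℂ × ℂ) := fun hh => hqq (Subtype.ext hh)
    have : (q : ℂ × ℂ).1.re ≠ (q' : ℂ × ℂ).1.re ∨ (q : ℂ × ℂ).1.im ≠ (q' : ℂ × ℂ).1.im ∨
        (q : ℂ × ℂ).2.re ≠ (q' : ℂ × ℂ).2.re ∨ (q : ℂ × ℂ).2.im ≠ (q' : ℂ × ℂ).2.im := by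
      by_contra hcon
      push_neg at hcon
      obtain ⟨a1, a2, a3, a4⟩ := hcon
      exact hne (Prod.ext (Complex.ext a1 a2) (Complex.ext a3 a4))
    rcases this with hh | hh | hh | hh
    · exact ⟨e1, ⟨e1, Algebra.subset_adjoin (by simp), rfl⟩, hh⟩
    · exact ⟨e2, ⟨e2, Algebra.subset_adjoin (by simp), rfl⟩, hh⟩
    · exact ⟨e3, ⟨e3, Algebra.subset_adjoin (by simp), rfl⟩, hh⟩
    · exact ⟨e4, ⟨e4, Algebra.subset_adjoin (by simp), rfl⟩, hh⟩
  have hrep : ∀ a : C(T, ℝ), a ∈ A → ∃ G, G ∈ V ∧ ∀ q : T, G (q : ℂ × ℂ) = a q := by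
    intro a ha
    induction ha using Algebra.adjoin_induction with
    | mem x hx =>
      simp only [Set.mem_insert_iff, Set.mem_singleton_iff] at hx
      rcases hx with hx | hx | hx | hx
      · exact ⟨fun p => p.1.re * 1, Submodule.subset_span
          ⟨fun z => z.re, fun _ => 1, Complex.continuous_re, continuous_const, rfl⟩,
          fun q => by simp [hx, e1]⟩
      · exact ⟨fun p => p.1.im * 1, Submodule.subset_span
          ⟨fun z => z.im, fun _ => 1, Complex.continuous_im, continuous_const, rfl⟩,
          fun q => by simp [hx, e2]⟩
      · exact ⟨fun p => p.2.re * 1, Submodule.subset_span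
          ⟨fun _ => 1, fun z => z.re, continuous_const, Complex.continuous_re, by
            funext p; ring⟩,
          fun q => by simp [hx, e3]⟩
      · exact ⟨fun p => p.2.im * 1, Submodule.subset_span
          ⟨fun _ => 1, fun z => z.im, continuous_const, Complex.continuous_im, by
            funext p; ring⟩,
          fun q => by simp [hx, e4]⟩
    | algebraMap r =>
      exact ⟨fun p => r * 1, Submodule.subset_span
        ⟨fun _ => r, fun _ => 1, continuous_const, continuous_const, rfl⟩,
        fun q => by simp⟩
    | add x y hx hy px py =>
      obtain ⟨G1, hG1, hG1v⟩ := px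
      obtain ⟨G2, hG2, hG2v⟩ := py
      exact ⟨G1 + G2, V.add_mem hG1 hG2, fun q => by
        simp [Pi.add_apply, hG1v q, hG2v q]⟩
    | mul x y hx hy px py =>
      obtain ⟨G1, hG1, hG1v⟩ := px
      obtain ⟨G2, hG2, hG2v⟩ := py
      exact ⟨G1 * G2, V_mul hG1 hG2, fun q => by
        simp [Pi.mul_apply, hG1v q, hG2v q]⟩
  rw [Metric.tendsto_atTop]
  intro ε hε
  set c : ℝ := ((μ0.prod μ0) Set.univ).toReal with hcdef
  have hc0 : 0 ≤ c := ENNReal.toReal_nonneg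
  set ε₀ : ℝ := ε / (2 * (1 + c)) with hε₀def
  have hε₀ : 0 < ε₀ := div_pos hε (by linarith)
  obtain ⟨a, ha⟩ := ContinuousMap.exists_mem_subalgebra_near_continuous_of_separatesPoints
    A hsep (fun q : T => F (q : ℂ × ℂ)) (hFc.comp continuous_subtype_val) ε₀ hε₀
  obtain ⟨G, hGV, hGval⟩ := hrep a a.2
  have hGc : Continuous G := (tendsto_V μn μ0 hconv S hGV).1
  have hGF : ∀ p : ℂ × ℂ, ‖F p - G p * cut2 S p‖ ≤ ε₀ := by
    intro p
    by_cases hp : p ∈ T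
    · have h1 : F p = F p * cut2 S p := congrFun hFeq p
      rw [Real.norm_eq_abs, h1]
      have h2 : F p * cut2 S p - G p * cut2 S p = (F p - G p) * cut2 S p := by ring
      rw [h2, abs_mul]
      have hb : |F p - G p| ≤ ε₀ := by
        have hv := ha ⟨p, hp⟩
        rw [Real.norm_eq_abs] at hv
        have : ((a : C(T,ℝ)) : T → ℝ) ⟨p, hp⟩ = G p := (hGval ⟨p, hp⟩).symm
        rw [this] at hv
        rw [abs_sub_comm]
        exact hv.le
      have habs : |cut2 S p| ≤ 1 := by
        rw [abs_of_nonneg (cut2_nonneg S p)]; exact cut2_le_one S p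
      calc |F p - G p| * |cut2 S p| ≤ ε₀ * 1 :=
            mul_le_mul hb habs (abs_nonneg _) hε₀.le
        _ = ε₀ := mul_one _
    · have hcut : cut2 S p = 0 := cut2_eq_zero_of_nmem hp
      have hFp : F p = 0 := by
        have := congrFun hFeq p
        rw [this, hcut, mul_zero]
      rw [hFp, hcut]
      simp [hε₀.le]
  have hmain := (tendsto_V μn μ0 hconv S hGV).2
  rw [Metric.tendsto_atTop] at hmain
  obtain ⟨N, hN⟩ := hmain (ε/2) (by linarith)
  refine ⟨N, fun n hn => ?_⟩
  have intF : ∀ (μ : Measure ℂ), IsFiniteMeasure μ → Integrable F (μ.prod μ) := by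
    intro μ hμ
    haveI := hμ
    exact hFc.integrable_of_hasCompactSupport hFs
  have intF' : ∀ (μ : Measure ℂ), IsFiniteMeasure μ →
      Integrable (fun p => G p * cut2 S p) (μ.prod μ) := by
    intro μ hμ
    haveI := hμ
    exact integrable_mul_cut2 hGc S μ μ
  have key : ∀ (μ : Measure ℂ), IsFiniteMeasure μ →
      dist (∫ p, F p ∂(μ.prod μ)) (∫ p, G p * cut2 S p ∂(μ.prod μ))
        ≤ ε₀ * ((μ.prod μ) Set.univ).toReal := by
    intro μ hμ
    haveI := hμ
    rw [Real.dist_eq, ← Real.norm_eq_abs, ← integral_sub (intF μ hμ) (intF' μ hμ)]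
    exact norm_integral_le_of_norm_le_const (ae_of_all _ fun p => hGF p)
  have hmass : ∀ n, (((μn n).prod (μn n)) Set.univ).toReal = 1 := by
    intro n
    rw [measure_univ, ENNReal.toReal_one]
  have d1 : dist (∫ p, F p ∂((μn n).prod (μn n)))
      (∫ p, G p * cut2 S p ∂((μn n).prod (μn n))) ≤ ε₀ := by
    have := key (μn n) inferInstance
    rwa [hmass n, mul_one] at this
  have d3 : dist (∫ p, G p * cut2 S p ∂(μ0.prod μ0)) (∫ p, F p ∂(μ0.prod μ0)) ≤ ε₀ * c := by
    rw [dist_comm]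
    exact key μ0 inferInstance
  have d2 := hN n hn
  have htri := dist_triangle4 (∫ p, F p ∂((μn n).prod (μn n)))
    (∫ p, G p * cut2 S p ∂((μn n).prod (μn n)))
    (∫ p, G p * cut2 S p ∂(μ0.prod μ0)) (∫ p, F p ∂(μ0.prod μ0))
  have harith2 : ε₀ + ε₀ * c = ε / 2 := by
    have h1c : (1 : ℝ) + c ≠ 0 := by linarith
    have : ε₀ * (1 + c) = ε / 2 := by
      rw [hε₀def]; field_simp
    nlinarith [this]
  have hlt : dist (∫ p, F p ∂((μn n).prod (μn n)))
      (∫ p, G p * cut2 S p ∂((μn n).prod (μn n)))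
        + dist (∫ p, G p * cut2 S p ∂((μn n).prod (μn n))) (∫ p, G p * cut2 S p ∂(μ0.prod μ0))
        + dist (∫ p, G p * cut2 S p ∂(μ0.prod μ0)) (∫ p, F p ∂(μ0.prod μ0)) < ε := by
    linarith
  exact lt_of_le_of_lt htri hlt


lemma tendsto_Cc_complex
    (μn : ℕ → Measure ℂ) (μ0 : Measure ℂ)
    [∀ n, IsProbabilityMeasure (μn n)] [IsFiniteMeasure μ0]
    (hconv : ∀ f : ℂ → ℝ, Continuous f → HasCompactSupport f →
      Tendsto (fun n => ∫ x, f x ∂(μn n)) atTop (𝓝 (∫ x, f x ∂μ0)))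
    {F : (ℂ × ℂ) → ℂ} (hFc : Continuous F) (hFs : HasCompactSupport F) :
    Tendsto (fun n => ∫ p, F p ∂((μn n).prod (μn n))) atTop
      (𝓝 (∫ p, F p ∂(μ0.prod μ0))) := by
  have hre := tendsto_Cc_real μn μ0 hconv (F := fun p => (F p).re)
    (Complex.continuous_re.comp hFc) (hFs.comp_left (g := Complex.re) rfl)
  have him := tendsto_Cc_real μn μ0 hconv (F := fun p => (F p).im)
    (Complex.continuous_im.comp hFc) (hFs.comp_left (g := Complex.im) rfl)
  have hkey : ∀ (μ : Measure ℂ), IsFiniteMeasure μ → ∫ p, F p ∂(μ.prod μ)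
      = ((∫ p, (F p).re ∂(μ.prod μ) : ℝ) : ℂ)
        + ((∫ p, (F p).im ∂(μ.prod μ) : ℝ) : ℂ) * Complex.I := by
    intro μ hμ
    haveI := hμ
    have hint : Integrable F (μ.prod μ) := hFc.integrable_of_hasCompactSupport hFs
    exact (integral_re_add_im hint).symm
  have h1 : Tendsto (fun n => ((∫ p, (F p).re ∂((μn n).prod (μn n)) : ℝ) : ℂ)
      + ((∫ p, (F p).im ∂((μn n).prod (μn n)) : ℝ) : ℂ) * Complex.I) atTop
      (𝓝 (((∫ p, (F p).re ∂(μ0.prod μ0) : ℝ) : ℂ)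
        + ((∫ p, (F p).im ∂(μ0.prod μ0) : ℝ) : ℂ) * Complex.I)) := by
    exact (((Complex.continuous_ofReal.tendsto _).comp hre).add
      (((Complex.continuous_ofReal.tendsto _).comp him).mul_const Complex.I))
  rw [hkey μ0 inferInstance]
  refine Tendsto.congr (fun n => ?_) h1
  exact (hkey (μn n) inferInstance).symm


end DIDQC

open DIDQC

/-- If Borel probability measures `μₙ` converge vaguely to a finite Borel measure `μ₀`
and `h` is `C²` with compact support, then for the bounded continuous extension `g` of
the difference quotient `(h(x)−h(y))/(x−y)`, the double integrals
`∬ g dμₙ dμₙ` converge to `∬ g dμ₀ dμ₀`. -/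
theorem double_integral_difference_quotient_convergence
    (μn : ℕ → Measure ℂ) (μ0 : Measure ℂ)
    [∀ n, IsProbabilityMeasure (μn n)] [IsFiniteMeasure μ0]
    (hconv : ∀ f : ℂ → ℝ, Continuous f → HasCompactSupport f →
      Tendsto (fun n => ∫ x, f x ∂(μn n)) atTop (𝓝 (∫ x, f x ∂μ0)))
    (h : ℂ → ℂ) (hC2 : ContDiff ℝ 2 h) (hsupp : HasCompactSupport h)
    (g : ℂ × ℂ → ℂ) (hgcont : Continuous g)
    (hgbd : ∃ M : ℝ, ∀ p : ℂ × ℂ, ‖g p‖ ≤ M)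
    (hgq : ∀ x y : ℂ, x ≠ y → g (x, y) = (h x - h y) / (x - y)) :
    Tendsto (fun n => ∫ p, g p ∂((μn n).prod (μn n))) atTop
      (𝓝 (∫ p, g p ∂(μ0.prod μ0))) := by
  classical
  obtain ⟨M, hM⟩ := hgbd
  have hMnorm : ∀ p : ℂ × ℂ, ‖g p‖ ≤ M := by
    intro p; exact hM p
  -- bound on h
  obtain ⟨C, hC1⟩ := (hC2.continuous.norm).bounded_above_of_compact_support hsupp.norm
  have hC : ∀ x : ℂ, ‖h x‖ ≤ C := fun x => by
    have := hC1 x; rwa [norm_norm] at this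
  have hC0 : 0 ≤ C := le_trans (norm_nonneg _) (hC 0)
  -- radius of the support of h
  obtain ⟨r₁, hr₁⟩ := (hsupp : IsCompact (tsupport h)).isBounded.subset_closedBall (0 : ℂ)
  set r₀ : ℝ := max r₁ 0 with hr₀def
  have hr₀ : ∀ z : ℂ, z ∈ tsupport h → ‖z‖ ≤ r₀ := by
    intro z hz
    have := hr₁ hz
    rw [Metric.mem_closedBall, Complex.dist_eq, sub_zero] at this
    exact le_trans this (le_max_left _ _)
  -- g vanishes when both coordinates are outside the support of h
  have claimZ : ∀ x y : ℂ, x ∉ tsupport h → y ∉ tsupport h → g (x, y) = 0 := by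
    intro x y hx hy
    by_cases hxy : x = y
    · subst hxy
      set U : Set (ℂ × ℂ) :=
        {q : ℂ × ℂ | q.1 ∉ tsupport h ∧ q.2 ∉ tsupport h ∧ q.1 ≠ q.2} with hUdef
      have hU0 : ∀ q ∈ U, g q = 0 := by
        rintro ⟨a, b⟩ ⟨ha, hb, hab⟩
        rw [hgq a b hab, image_eq_zero_of_notMem_tsupport ha,
          image_eq_zero_of_notMem_tsupport hb, sub_zero, zero_div]
      have hclosed : IsClosed {q : ℂ × ℂ | g q = 0} :=
        isClosed_singleton.preimage hgcont
      have hmem : (x, x) ∈ closure U := by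
        rw [Metric.mem_closure_iff]
        intro ε hε
        obtain ⟨δ, hδ, hball⟩ := Metric.isOpen_iff.mp
          (isClosed_tsupport h).isOpen_compl x hx
        set t : ℝ := min (ε/2) (δ/2) with htdef
        have ht : 0 < t := lt_min (by linarith) (by linarith)
        refine ⟨(x, x + (t:ℂ)), ⟨?_, ?_, ?_⟩, ?_⟩
        · exact hx
        · apply hball
          rw [Metric.mem_ball, Complex.dist_eq]
          simp only [add_sub_cancel_left]
          rw [Complex.norm_real, Real.norm_of_nonneg ht.le]
          exact lt_of_le_of_lt (min_le_right _ _) (by linarith)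
        · intro hcon
          have : (t:ℂ) = 0 := by
            have := congrArg (fun w => w - x) hcon
            simpa using this.symm
          exact ht.ne' (by exact_mod_cast this)
        · rw [Prod.dist_eq]
          simp only [dist_self]
          rw [Complex.dist_eq]
          simp only [sub_add_cancel_left]
          rw [max_eq_right (by positivity)]
          have habsneg : ‖(-(t:ℂ))‖ = t := by
            rw [norm_neg, Complex.norm_real, Real.norm_of_nonneg ht.le]
          rw [habsneg]
          exact lt_of_le_of_lt (min_le_left _ _) (by linarith)
      have := closure_minimal (fun q hq => hU0 q hq) hclosed hmem
      exact this
    · rw [hgq x y hxy, image_eq_zero_of_notMem_tsupport hx,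
        image_eq_zero_of_notMem_tsupport hy]
      simp
  -- integrability of g
  have intg : ∀ (μ : Measure ℂ), IsFiniteMeasure μ → Integrable g (μ.prod μ) := by
    intro μ hμ
    haveI := hμ
    exact Integrable.mono' (integrable_const M) hgcont.aestronglyMeasurable
      (ae_of_all _ hMnorm)
  rw [Metric.tendsto_atTop]
  intro ε hε
  obtain ⟨c, hcdef, hc0⟩ : ∃ c : ℝ, c = ((μ0.prod μ0) Set.univ).toReal ∧ 0 ≤ c :=
    ⟨_, rfl, ENNReal.toReal_nonneg⟩
  obtain ⟨ε₀, hε₀, harith2⟩ : ∃ e : ℝ, 0 < e ∧ e + e * c = ε / 2 := by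
    refine ⟨ε / (2 * (1 + c)), div_pos hε (by linarith), ?_⟩
    have h1c : (1:ℝ) + c ≠ 0 := by linarith
    field_simp
  obtain ⟨R, hr₀R, hRgap⟩ : ∃ R : ℝ, r₀ ≤ R ∧ C / ε₀ + 1 ≤ R - r₀ := by
    have h0 : 0 ≤ C / ε₀ := div_nonneg hC0 hε₀.le
    exact ⟨r₀ + C / ε₀ + 1, by linarith, by linarith⟩
  have hgap_pos : (0:ℝ) < C / ε₀ + 1 := by positivity
  have hCbound : C / (C / ε₀ + 1) ≤ ε₀ := by
    rw [div_le_iff₀ hgap_pos]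
    have : ε₀ * (C / ε₀) = C := by field_simp
    nlinarith [this]
  -- the key pointwise bound for the remainder
  have hrem : ∀ p : ℂ × ℂ, ‖g p - (cut2 R p : ℝ) • g p‖ ≤ ε₀ := by
    intro p
    have hsm : g p - (cut2 R p : ℝ) • g p = ((1 - cut2 R p : ℝ)) • g p := by
      rw [sub_smul, one_smul]
    rw [hsm, norm_smul, Real.norm_eq_abs]
    have habs1 : |1 - cut2 R p| ≤ 1 := by
      rw [abs_le]; constructor
      · have := cut2_le_one R p; linarith
      · have := cut2_nonneg R p; linarith
    -- case analysis
    by_cases hx : p.1 ∈ tsupport h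
    · by_cases hy2 : ‖p.2‖ ≤ R
      · -- cut2 = 1
        have h1 : cut R p.1 = 1 := cut_eq_one (le_trans (hr₀ _ hx) hr₀R)
        have h2 : cut R p.2 = 1 := cut_eq_one hy2
        have : cut2 R p = 1 := by unfold cut2; rw [h1, h2, mul_one]
        rw [this]; simp [hε₀.le]
      · push_neg at hy2
        have hy : p.2 ∉ tsupport h := by
          intro hcon
          exact absurd (le_trans (hr₀ _ hcon) hr₀R) (not_le.mpr hy2)
        have hxy : p.1 ≠ p.2 := by
          intro hcon
          rw [hcon] at hx
          exact hy hx
        have hdist : C / ε₀ + 1 ≤ ‖p.1 - p.2‖ := by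
          have h1 : ‖p.2‖ - ‖p.1‖ ≤ ‖p.1 - p.2‖ := by
            have := norm_sub_norm_le p.2 p.1
            rwa [norm_sub_rev p.2 p.1] at this
          have h2 : ‖p.1‖ ≤ r₀ := by exact hr₀ _ hx
          have h3 : R < ‖p.2‖ := by exact hy2
          linarith
        have hgval : ‖g p‖ ≤ ε₀ := by
          have : g p = (h p.1 - h p.2) / (p.1 - p.2) := by
            rw [← hgq p.1 p.2 hxy]
          rw [this, norm_div, image_eq_zero_of_notMem_tsupport hy, sub_zero]
          have hnum : ‖h p.1‖ ≤ C := hC p.1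
          have hden : (0:ℝ) < ‖p.1 - p.2‖ := lt_of_lt_of_le hgap_pos hdist
          calc ‖h p.1‖ / ‖p.1 - p.2‖ ≤ C / (C / ε₀ + 1) :=
                div_le_div₀ hC0 hnum hgap_pos hdist
            _ ≤ ε₀ := hCbound
        calc |1 - cut2 R p| * ‖g p‖ ≤ 1 * ε₀ :=
              mul_le_mul habs1 hgval (norm_nonneg _) zero_le_one
          _ = ε₀ := one_mul _
    · by_cases hy : p.2 ∈ tsupport h
      · by_cases hx2 : ‖p.1‖ ≤ R
        · have h1 : cut R p.1 = 1 := cut_eq_one hx2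
          have h2 : cut R p.2 = 1 := cut_eq_one (le_trans (hr₀ _ hy) hr₀R)
          have : cut2 R p = 1 := by unfold cut2; rw [h1, h2, mul_one]
          rw [this]; simp [hε₀.le]
        · push_neg at hx2
          have hxy : p.1 ≠ p.2 := by
            intro hcon
            rw [← hcon] at hy
            exact hx hy
          have hdist : C / ε₀ + 1 ≤ ‖p.1 - p.2‖ := by
            have h1 : ‖p.1‖ - ‖p.2‖ ≤ ‖p.1 - p.2‖ := norm_sub_norm_le p.1 p.2
            have h2 : ‖p.2‖ ≤ r₀ := by exact hr₀ _ hy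
            have h3 : R < ‖p.1‖ := by exact hx2
            linarith
          have hgval : ‖g p‖ ≤ ε₀ := by
            have : g p = (h p.1 - h p.2) / (p.1 - p.2) := by
              rw [← hgq p.1 p.2 hxy]
            rw [this, norm_div, image_eq_zero_of_notMem_tsupport hx, zero_sub, norm_neg]
            have hnum : ‖h p.2‖ ≤ C := hC p.2
            calc ‖h p.2‖ / ‖p.1 - p.2‖ ≤ C / (C / ε₀ + 1) :=
                  div_le_div₀ hC0 hnum hgap_pos hdist
              _ ≤ ε₀ := hCbound
          calc |1 - cut2 R p| * ‖g p‖ ≤ 1 * ε₀ :=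
                mul_le_mul habs1 hgval (norm_nonneg _) zero_le_one
            _ = ε₀ := one_mul _
      · have : g p = 0 := by
          have := claimZ p.1 p.2 hx hy
          rwa [Prod.mk.eta] at this
        rw [this]
        simp [hε₀.le]
  -- the compactly supported main part
  set G : ℂ × ℂ → ℂ := fun p => (cut2 R p : ℝ) • g p with hGdef
  have hGc : Continuous G := (cut2_continuous R).smul hgcont
  have hGs : HasCompactSupport G := by
    apply HasCompactSupport.intro
      (K := Metric.closedBall 0 (R + 1) ×ˢ Metric.closedBall 0 (R + 1))
      ((isCompact_closedBall _ _).prod (isCompact_closedBall _ _))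
    intro p hp
    rw [hGdef]
    simp only
    rw [cut2_eq_zero_of_nmem hp, zero_smul]
  have hGint : ∀ (μ : Measure ℂ), IsFiniteMeasure μ → Integrable G (μ.prod μ) := by
    intro μ hμ
    haveI := hμ
    exact hGc.integrable_of_hasCompactSupport hGs
  have hGtend := tendsto_Cc_complex μn μ0 hconv hGc hGs
  rw [Metric.tendsto_atTop] at hGtend
  obtain ⟨N, hN⟩ := hGtend (ε/2) (by linarith)
  refine ⟨N, fun n hn => ?_⟩
  have key : ∀ (μ : Measure ℂ), IsFiniteMeasure μ →
      dist (∫ p, g p ∂(μ.prod μ)) (∫ p, G p ∂(μ.prod μ))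
        ≤ ε₀ * ((μ.prod μ) Set.univ).toReal := by
    intro μ hμ
    haveI := hμ
    rw [dist_eq_norm, ← integral_sub (intg μ hμ) (hGint μ hμ)]
    exact norm_integral_le_of_norm_le_const (ae_of_all _ fun p => hrem p)
  have d1 : dist (∫ p, g p ∂((μn n).prod (μn n))) (∫ p, G p ∂((μn n).prod (μn n))) ≤ ε₀ := by
    have := key (μn n) inferInstance
    rwa [measure_univ, ENNReal.toReal_one, mul_one] at this
  have d3 : dist (∫ p, G p ∂(μ0.prod μ0)) (∫ p, g p ∂(μ0.prod μ0)) ≤ ε₀ * c := by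
    rw [dist_comm]
    have := key μ0 inferInstance
    rwa [← hcdef] at this
  have d2 := hN n hn
  have htri := dist_triangle4 (∫ p, g p ∂((μn n).prod (μn n)))
    (∫ p, G p ∂((μn n).prod (μn n))) (∫ p, G p ∂(μ0.prod μ0)) (∫ p, g p ∂(μ0.prod μ0))
  have hlt : dist (∫ p, g p ∂((μn n).prod (μn n))) (∫ p, G p ∂((μn n).prod (μn n)))
      + dist (∫ p, G p ∂((μn n).prod (μn n))) (∫ p, G p ∂(μ0.prod μ0))
      + dist (∫ p, G p ∂(μ0.prod μ0)) (∫ p, g p ∂(μ0.prod μ0)) < ε := by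
    linarith
  exact lt_of_le_of_lt htri hlt
end
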